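/- Let Ê₁ be a p×m real matrix, F̂₁ a p×n real matrix with full row rank, Λ₁ a diagonal positive definite n×n matrix, and suppose Ê₁ Ê₁ᵀ ⪯ F̂₁ Λ₁ F̂₁ᵀ. Define F̂₁ᴿ := Λ₁ F̂₁ᵀ (F̂₁ Λ₁ F̂₁ᵀ)⁻¹ and D₁ := F̂₁ᴿ Ê₁. Then Ê₁ = F̂₁ D₁ and D₁ D₁ᵀ ⪯ Λ₁. -/

import Mathlib

open Matrix

theorem stmt6 (n p m : ℕ)
    (E₁ : Matrix (Fin p) (Fin m) ℝ) (F₁ : Matrix (Fin p) (Fin n) ℝ)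
    (hrank : F₁.rank = p)
    (Λ₁ : Matrix (Fin n) (Fin n) ℝ) (hdiag : Λ₁.IsDiag) (hΛ : Λ₁.PosDef)
    (h : (F₁ * Λ₁ * F₁ᵀ - E₁ * E₁ᵀ).PosSemidef)
    (FR : Matrix (Fin n) (Fin p) ℝ) (hFR : FR = Λ₁ * F₁ᵀ * (F₁ * Λ₁ * F₁ᵀ)⁻¹)
    (D₁ : Matrix (Fin n) (Fin m) ℝ) (hD : D₁ = FR * E₁) :
    E₁ = F₁ * D₁ ∧ (Λ₁ - D₁ * D₁ᵀ).PosSemidef := by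
  have hΛsym : Λ₁ᵀ = Λ₁ := by
    have := hΛ.isHermitian.eq
    rwa [conjTranspose_eq_transpose_of_trivial] at this
  have hli : LinearIndependent ℝ (fun i ↦ F₁ i) := by
    rw [linearIndependent_iff_card_eq_finrank_span, Set.finrank,
      show (Set.range fun i => F₁ i) = Set.range F₁.row from rfl,
      ← Matrix.rank_eq_finrank_span_row, hrank, Fintype.card_fin]
  have hinj : Function.Injective F₁.vecMul := Matrix.vecMul_injective_iff.mpr hli
  have hS : (F₁ * Λ₁ * F₁ᵀ).PosDef := by
    refine Matrix.PosDef.of_dotProduct_mulVec_pos ?_ (fun x hx => ?_)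
    · show _ᴴ = _
      rw [conjTranspose_eq_transpose_of_trivial, transpose_mul, transpose_mul,
        transpose_transpose, hΛsym, Matrix.mul_assoc]
    · have hy : x ᵥ* F₁ ≠ 0 := fun h0 => hx (hinj (by simpa using h0))
      have h2 := hΛ.dotProduct_mulVec_pos hy
      simp only [star_trivial, Matrix.dotProduct_mulVec, Matrix.vecMul_vecMul] at h2 ⊢
      rwa [← Matrix.mulVec_transpose F₁ x, Matrix.dotProduct_mulVec,
        Matrix.vecMul_vecMul] at h2
  have hSsym : (F₁ * Λ₁ * F₁ᵀ)ᵀ = F₁ * Λ₁ * F₁ᵀ := by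
    have := hS.isHermitian.eq
    rwa [conjTranspose_eq_transpose_of_trivial] at this
  have hdet : IsUnit (F₁ * Λ₁ * F₁ᵀ).det := hS.det_pos.ne'.isUnit
  have hmul : (F₁ * Λ₁ * F₁ᵀ) * (F₁ * Λ₁ * F₁ᵀ)⁻¹ = 1 := Matrix.mul_nonsing_inv _ hdet
  have hmul' : (F₁ * Λ₁ * F₁ᵀ)⁻¹ * (F₁ * Λ₁ * F₁ᵀ) = 1 := Matrix.nonsing_inv_mul _ hdet
  have h1 : E₁ = F₁ * D₁ := by
    rw [hD, hFR]
    simp only [← Matrix.mul_assoc]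
    rw [hmul, Matrix.one_mul]
  refine ⟨h1, ?_⟩
  set T := (F₁ * Λ₁ * F₁ᵀ)⁻¹ with hT
  have hTsym : Tᵀ = T := by
    rw [hT, Matrix.transpose_nonsing_inv, hSsym]
  have hΛsym' := hΛsym
  obtain ⟨B, hBh, hBB⟩ : ∃ B : Matrix (Fin n) (Fin n) ℝ, Bᵀ = B ∧ B * B = Λ₁ := by
    open scoped MatrixOrder in
    refine ⟨CFC.sqrt Λ₁, ?_, CFC.sqrt_mul_sqrt_self Λ₁ hΛ.posSemidef.nonneg⟩
    open scoped MatrixOrder in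
    have := (CFC.sqrt_nonneg Λ₁).posSemidef.isHermitian.eq
    rwa [conjTranspose_eq_transpose_of_trivial] at this
  have hFRT : FRᵀ = T * (F₁ * Λ₁) := by
    rw [hFR, transpose_mul, transpose_mul, transpose_transpose, hTsym, hΛsym]
  have psd1 : (FR * (F₁ * Λ₁ * F₁ᵀ - E₁ * E₁ᵀ) * FRᵀ).PosSemidef := by
    have := h.mul_mul_conjTranspose_same FR
    rwa [conjTranspose_eq_transpose_of_trivial] at this
  set Q := B * F₁ᵀ * T * F₁ * B with hQ
  have hQsym : Qᵀ = Q := by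
    rw [hQ]
    simp only [transpose_mul, transpose_transpose, hTsym, hBh]
    simp only [← Matrix.mul_assoc]
  have e1 : F₁ * B * (B * F₁ᵀ) = F₁ * Λ₁ * F₁ᵀ := by
    rw [Matrix.mul_assoc, ← Matrix.mul_assoc B, hBB, ← Matrix.mul_assoc]
  have hQQ : Q * Q = Q := by
    calc Q * Q
        = (B * F₁ᵀ) * (T * (F₁ * B * (B * F₁ᵀ))) * (T * (F₁ * B)) := by
          simp only [hQ, Matrix.mul_assoc]
      _ = (B * F₁ᵀ) * (T * (F₁ * Λ₁ * F₁ᵀ)) * (T * (F₁ * B)) := by rw [e1]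
      _ = (B * F₁ᵀ) * (1 : Matrix (Fin p) (Fin p) ℝ) * (T * (F₁ * B)) := by rw [hmul']
      _ = Q := by rw [Matrix.mul_one, hQ]; simp only [Matrix.mul_assoc]
  have hpsdQ : (1 - Q).PosSemidef := by
    have heq : 1 - Q = (1 - Q)ᴴ * (1 - Q) := by
      rw [conjTranspose_eq_transpose_of_trivial, transpose_sub, transpose_one, hQsym,
        Matrix.sub_mul, Matrix.mul_sub, Matrix.mul_sub, hQQ, Matrix.one_mul, Matrix.mul_one]
      simp only [Matrix.one_mul]
      abel
    rw [heq]
    exact posSemidef_conjTranspose_mul_self _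
  have hBQB : FR * (F₁ * Λ₁ * F₁ᵀ) * FRᵀ = B * Q * B := by
    calc FR * (F₁ * Λ₁ * F₁ᵀ) * FRᵀ
        = (Λ₁ * F₁ᵀ) * (T * (F₁ * Λ₁ * F₁ᵀ)) * (T * (F₁ * Λ₁)) := by
          rw [hFRT, hFR]; simp only [Matrix.mul_assoc]
      _ = (Λ₁ * F₁ᵀ) * (1 : Matrix (Fin p) (Fin p) ℝ) * (T * (F₁ * Λ₁)) := by rw [hmul']
      _ = Λ₁ * (F₁ᵀ * (T * (F₁ * Λ₁))) := by rw [Matrix.mul_one]; simp only [Matrix.mul_assoc]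
      _ = B * Q * B := by rw [hQ, ← hBB]; simp only [Matrix.mul_assoc]
  have psd2 : (Λ₁ - FR * (F₁ * Λ₁ * F₁ᵀ) * FRᵀ).PosSemidef := by
    have key : Λ₁ - FR * (F₁ * Λ₁ * F₁ᵀ) * FRᵀ = B * (1 - Q) * Bᴴ := by
      rw [conjTranspose_eq_transpose_of_trivial, hBh, Matrix.mul_sub, Matrix.sub_mul,
        Matrix.mul_one, hBB, hBQB]
    rw [key]
    exact hpsdQ.mul_mul_conjTranspose_same B
  have final : Λ₁ - D₁ * D₁ᵀ =
      FR * (F₁ * Λ₁ * F₁ᵀ - E₁ * E₁ᵀ) * FRᵀ + (Λ₁ - FR * (F₁ * Λ₁ * F₁ᵀ) * FRᵀ) := by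
    rw [hD, Matrix.mul_sub, Matrix.sub_mul, transpose_mul]
    have e2 : FR * E₁ * (E₁ᵀ * FRᵀ) = FR * (E₁ * E₁ᵀ) * FRᵀ := by
      simp only [Matrix.mul_assoc]
    rw [e2]
    abel
  rw [final]
  exact psd1.add psd2
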